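/- Fix T0 ∈ ℝ. Let q : ℝ → ℝ be antitone with q(t) > 0 for all t, let P : ℝ → ℝ be continuous, antitone and with P(t) > 0 for all t, and let N : ℝ → ℝ be nondecreasing with N(T) ≥ 0 for all T. For T > T0 define s(T) := N(T) / ∫_{T0}^T P(t)·q(t) dt. Then the function T ↦ (T − T0)·s(T) is nondecreasing on (T0, ∞). -/
import Mathlib


open MeasureTheory

/-- In a nonnegative-rate environment (nonincreasing bond prices `P`), the
maturity-weighted fair CDS spread `(T − T0)·s(T)` is nondecreasing in the maturity,
where `s(T) = N(T) / ∫_{T0}^T P·q`. -/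
theorem stmt_8
    (T0 : ℝ) (q P N : ℝ → ℝ)
    (hq : Antitone q) (hq0 : ∀ t, 0 < q t)
    (hP : Continuous P) (hPa : Antitone P) (hP0 : ∀ t, 0 < P t)
    (hN : Monotone N) (hN0 : ∀ T, 0 ≤ N T)
    (s : ℝ → ℝ) (hs : ∀ T, T0 < T → s T = N T / ∫ t in T0..T, P t * q t) :
    MonotoneOn (fun T => (T - T0) * s T) (Set.Ioi T0) := by
  set f : ℝ → ℝ := fun t => P t * q t with hfdef
  have hfa : Antitone f := fun x y hxy =>
    mul_le_mul (hPa hxy) (hq hxy) (hq0 y).le (hP0 x).le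
  have hf0 : ∀ t, 0 < f t := fun t => mul_pos (hP0 t) (hq0 t)
  have hInt : ∀ x y : ℝ, IntervalIntegrable f volume x y := fun x y =>
    hfa.intervalIntegrable
  have hIpos : ∀ x, T0 < x → 0 < ∫ t in T0..x, f t := fun x hx =>
    intervalIntegral.intervalIntegral_pos_of_pos_on (hInt T0 x)
      (fun t _ => hf0 t) hx
  intro a ha b hb hab
  have ha' : T0 < a := ha
  have hb' : T0 < b := hb
  simp only
  rw [hs a ha', hs b hb']
  have Ia := hIpos a ha'
  have Ib := hIpos b hb'
  have hsplit : (∫ t in T0..b, f t) = (∫ t in T0..a, f t) + ∫ t in a..b, f t :=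
    (intervalIntegral.integral_add_adjacent_intervals (hInt T0 a) (hInt a b)).symm
  have h1 : (∫ t in a..b, f t) ≤ f a * (b - a) := by
    have := intervalIntegral.integral_mono_on hab (hInt a b)
      (intervalIntegrable_const (c := f a)) (fun t ht => hfa ht.1)
    simpa [hfdef, smul_eq_mul, mul_assoc, mul_comm, mul_left_comm] using this
  have h2 : f a * (a - T0) ≤ ∫ t in T0..a, f t := by
    have := intervalIntegral.integral_mono_on ha'.le
      (intervalIntegrable_const (c := f a)) (hInt T0 a) (fun t ht => hfa ht.2)
    simpa [hfdef, smul_eq_mul, mul_assoc, mul_comm, mul_left_comm] using this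
  have key : (a - T0) * ∫ t in T0..b, f t ≤ (b - T0) * ∫ t in T0..a, f t := by
    rw [hsplit]
    nlinarith [mul_le_mul_of_nonneg_left h1 (sub_nonneg.mpr ha'.le),
      mul_le_mul_of_nonneg_left h2 (sub_nonneg.mpr hab), hf0 a]
  have ratio : (a - T0) / (∫ t in T0..a, f t) ≤ (b - T0) / (∫ t in T0..b, f t) :=
    (div_le_div_iff₀ Ia Ib).mpr key
  calc (a - T0) * (N a / ∫ t in T0..a, f t)
      = N a * ((a - T0) / ∫ t in T0..a, f t) := by ring
    _ ≤ N b * ((b - T0) / ∫ t in T0..b, f t) :=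
        mul_le_mul (hN hab) ratio
          (div_nonneg (sub_nonneg.mpr ha'.le) Ia.le) (hN0 b)
    _ = (b - T0) * (N b / ∫ t in T0..b, f t) := by ring
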